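/- For β > d and a relatively-separated subset Λ of ℝ^d, the Jaffard class 𝒥_β(Λ) of matrices A = (a(λ,λ'))_{λ,λ'∈Λ} with ‖A‖_{𝒥_β} := sup_{λ,λ'} (1+|λ-λ'|)^β |a(λ,λ')| < ∞ is closed under matrix multiplication, and there is a constant C (depending only on β, d, and the separation constant of Λ) such that ‖AB‖_{𝒥_β} ≤ C ‖A‖_{𝒥_β} ‖B‖_{𝒥_β} for all A, B ∈ 𝒥_β(Λ). -/

import Mathlib

/-- A subset `Λ ⊆ ℝ^d` is relatively separated with constant `D`: every translated
unit cube `λ + [0,1)^d` covering a point `t` accounts for at most `D` elements of `Λ`. -/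
def RelSep {d : ℕ} (Λ : Set (EuclideanSpace ℝ (Fin d))) (D : ℕ) : Prop :=
  ∀ t : EuclideanSpace ℝ (Fin d),
    ({lam : Λ | ∀ i, (lam : EuclideanSpace ℝ (Fin d)) i ≤ t i ∧
        t i < (lam : EuclideanSpace ℝ (Fin d)) i + 1}).Finite ∧
    ({lam : Λ | ∀ i, (lam : EuclideanSpace ℝ (Fin d)) i ≤ t i ∧
        t i < (lam : EuclideanSpace ℝ (Fin d)) i + 1}).ncard ≤ D

namespace Stmt5Aux

noncomputable section

open Real

/-- Embedding of integer vectors into Euclidean space. -/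
def emb (d : ℕ) (n : Fin d → ℤ) : EuclideanSpace ℝ (Fin d) := WithLp.toLp 2 (fun i => (n i : ℝ))

variable {d : ℕ}

lemma coord_abs_le_norm (x : EuclideanSpace ℝ (Fin d)) (i : Fin d) : |x i| ≤ ‖x‖ := by
  have h : |x i| = √(‖x i‖ ^ 2) := by
    rw [Real.sqrt_sq (norm_nonneg _), Real.norm_eq_abs]
  rw [EuclideanSpace.norm_eq, h]
  exact Real.sqrt_le_sqrt
    (Finset.single_le_sum (fun j _ => sq_nonneg ‖x j‖) (Finset.mem_univ i))

lemma dist_ceil (x : EuclideanSpace ℝ (Fin d)) :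
    dist x (emb d (fun i => ⌈x i⌉)) ≤ Real.sqrt d := by
  rw [EuclideanSpace.dist_eq]
  have hbound : ∀ i ∈ Finset.univ,
      dist (x i) ((emb d (fun i => ⌈x i⌉)) i) ^ 2 ≤ 1 := by
    intro i _
    have h1 : x i ≤ ⌈x i⌉ := Int.le_ceil _
    have h2 : (⌈x i⌉ : ℝ) < x i + 1 := Int.ceil_lt_add_one _
    have habs : |x i - (⌈x i⌉ : ℝ)| ≤ 1 := abs_le.2 ⟨by linarith, by linarith⟩
    have : dist (x i) ((emb d (fun i => ⌈x i⌉)) i) = |x i - (⌈x i⌉ : ℝ)| := by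
      simp [emb, Real.dist_eq]
    rw [this]
    nlinarith [abs_nonneg (x i - (⌈x i⌉ : ℝ))]
  have hsum : (∑ i, dist (x i) ((emb d (fun i => ⌈x i⌉)) i) ^ 2) ≤ (d : ℝ) := by
    calc (∑ i, dist (x i) ((emb d (fun i => ⌈x i⌉)) i) ^ 2)
        ≤ ∑ _i : Fin d, (1 : ℝ) := Finset.sum_le_sum hbound
      _ = (d : ℝ) := by simp
  exact Real.sqrt_le_sqrt hsum

lemma rpow_neg_le_of_le {β x y C : ℝ} (hx : 0 < x) (hy : 0 < y)
    (h : y ^ β ≤ C * x ^ β) : x ^ (-β) ≤ C * y ^ (-β) := by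
  have hxb : 0 < x ^ β := Real.rpow_pos_of_pos hx β
  have hyb : 0 < y ^ β := Real.rpow_pos_of_pos hy β
  rw [Real.rpow_neg hx.le, Real.rpow_neg hy.le, ← div_eq_mul_inv,
    le_div_iff₀ hyb, inv_mul_le_iff₀ hxb]
  linarith

lemma summable_int_rpow {p : ℝ} (hp : 1 < p) :
    Summable (fun z : ℤ => (1 + |(z : ℝ)|) ^ (-p)) := by
  have hnat : Summable (fun n : ℕ => (1 + (n : ℝ)) ^ (-p)) := by
    have h : Summable (fun n : ℕ => (n : ℝ) ^ (-p)) :=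
      Real.summable_nat_rpow.2 (by linarith)
    have h2 := (summable_nat_add_iff 1).2 h
    exact h2.congr (fun n => by push_cast; ring_nf)
  apply Summable.of_nat_of_neg
  · exact hnat.congr (fun n => by norm_num)
  · exact hnat.congr (fun n => by norm_num)

lemma summable_prod_fn {g : ℤ → ℝ} (hg0 : ∀ z, 0 ≤ g z) (hg : Summable g) :
    ∀ d : ℕ, Summable (fun n : Fin d → ℤ => ∏ i, g (n i)) := by
  intro d
  induction d with
  | zero => exact Summable.of_finite
  | succ d ih =>
    have hmul := Summable.mul_of_nonneg hg ih (fun z => hg0 z)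
      (fun y => Finset.prod_nonneg fun i _ => hg0 _)
    apply ((Fin.consEquiv (fun _ : Fin (d + 1) => ℤ)).summable_iff).1
    refine hmul.congr fun x => ?_
    simp [Fin.consEquiv, Fin.prod_univ_succ]

lemma summable_g {β : ℝ} (hβ : (d : ℝ) < β) :
    Summable (fun n : Fin d → ℤ => (1 + ‖emb d n‖) ^ (-β)) := by
  rcases Nat.eq_zero_or_pos d with hd | hd
  · subst hd; exact Summable.of_finite
  have hd0 : (0 : ℝ) < d := by exact_mod_cast hd
  set p := β / d with hp_def
  have hp : 1 < p := (one_lt_div hd0).2 hβ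
  have hp0 : 0 < p := by linarith
  have hg : Summable (fun z : ℤ => (1 + |(z : ℝ)|) ^ (-p)) := summable_int_rpow hp
  have hprod := summable_prod_fn
    (fun z => Real.rpow_nonneg (by positivity) _) hg d
  apply Summable.of_nonneg_of_le
    (fun n => Real.rpow_nonneg (by positivity) _) (fun n => ?_) hprod
  have hX : (0 : ℝ) < 1 + ‖emb d n‖ := by positivity
  have key : (∏ i, (1 + |((n i) : ℝ)|) ^ p) ≤ (1 + ‖emb d n‖) ^ β := by
    calc (∏ i, (1 + |((n i) : ℝ)|) ^ p)
        ≤ ∏ _i : Fin d, (1 + ‖emb d n‖) ^ p := by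
          apply Finset.prod_le_prod (fun i _ => Real.rpow_nonneg (by positivity) _)
          intro i _
          apply Real.rpow_le_rpow (by positivity) ?_ hp0.le
          have h := coord_abs_le_norm (emb d n) i
          have : |((n i) : ℝ)| ≤ ‖emb d n‖ := h
          linarith
      _ = ((1 + ‖emb d n‖) ^ p) ^ (d : ℕ) := by
          rw [Finset.prod_const, Finset.card_univ, Fintype.card_fin]
      _ = (1 + ‖emb d n‖) ^ (p * d) := by
          rw [← Real.rpow_natCast ((1 + ‖emb d n‖) ^ p) d, ← Real.rpow_mul hX.le]
      _ = (1 + ‖emb d n‖) ^ β := by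
          rw [hp_def, div_mul_cancel₀ _ (ne_of_gt hd0)]
  have hprodpos : 0 < ∏ i, (1 + |((n i) : ℝ)|) ^ p :=
    Finset.prod_pos fun i _ => Real.rpow_pos_of_pos (by positivity) _
  calc (1 + ‖emb d n‖) ^ (-β) = ((1 + ‖emb d n‖) ^ β)⁻¹ := by
        rw [Real.rpow_neg hX.le]
    _ ≤ (∏ i, (1 + |((n i) : ℝ)|) ^ p)⁻¹ := by
        apply inv_anti₀ hprodpos key
    _ = ∏ i, (1 + |((n i) : ℝ)|) ^ (-p) := by
        rw [← Finset.prod_inv_distrib]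
        exact Finset.prod_congr rfl fun i _ => by
          rw [Real.rpow_neg (by positivity)]

lemma key_lemma (β : ℝ) (hβ : (d : ℝ) < β) (Λ : Set (EuclideanSpace ℝ (Fin d)))
    (D : ℕ) (hΛ : RelSep Λ D) :
    ∃ S > (0 : ℝ), ∀ μ : EuclideanSpace ℝ (Fin d),
      Summable (fun lam : Λ =>
        (1 + dist (lam : EuclideanSpace ℝ (Fin d)) μ) ^ (-β)) ∧
      (∑' lam : Λ, (1 + dist (lam : EuclideanSpace ℝ (Fin d)) μ) ^ (-β)) ≤ S := by
  have hβ0 : 0 < β := lt_of_le_of_lt (Nat.cast_nonneg d) hβ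
  set K := (1 + Real.sqrt d) ^ β with hK_def
  have hKpos : 0 < K := Real.rpow_pos_of_pos (by positivity) _
  have hg := summable_g (d := d) hβ
  set S₀ := ∑' n : Fin d → ℤ, (1 + ‖emb d n‖) ^ (-β) with hS₀_def
  have hS₀ : 0 ≤ S₀ := tsum_nonneg fun n => Real.rpow_nonneg (by positivity) _
  have hDK : 0 ≤ (D : ℝ) * K * (K * S₀) :=
    mul_nonneg (mul_nonneg (Nat.cast_nonneg D) hKpos.le) (mul_nonneg hKpos.le hS₀)
  refine ⟨(D : ℝ) * K * (K * S₀) + 1, by linarith, fun μ => ?_⟩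
  -- the "shift" estimate
  have shift : ∀ x y ν : EuclideanSpace ℝ (Fin d), dist x y ≤ Real.sqrt d →
      (1 + dist x ν) ^ (-β) ≤ K * (1 + dist y ν) ^ (-β) := by
    intro x y ν hxy
    have h1 : (0 : ℝ) < 1 + dist x ν := by positivity
    have h2 : (0 : ℝ) < 1 + dist y ν := by positivity
    have hs : 0 ≤ Real.sqrt d := Real.sqrt_nonneg _
    have htri : 1 + dist y ν ≤ (1 + Real.sqrt d) * (1 + dist x ν) := by
      have ht := dist_triangle y x ν
      have hyx : dist y x ≤ Real.sqrt d := by rw [dist_comm]; exact hxy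
      nlinarith [dist_nonneg (x := x) (y := ν)]
    apply rpow_neg_le_of_le h1 h2
    calc (1 + dist y ν) ^ β ≤ ((1 + Real.sqrt d) * (1 + dist x ν)) ^ β :=
          Real.rpow_le_rpow h2.le htri hβ0.le
      _ = K * (1 + dist x ν) ^ β := Real.mul_rpow (by positivity) h1.le
  -- the ceiling map and its fibers
  set c : Λ → (Fin d → ℤ) :=
    fun lam => fun i => ⌈(lam : EuclideanSpace ℝ (Fin d)) i⌉ with hc_def
  have hfin : ∀ n : Fin d → ℤ, ({lam : Λ | c lam = n}).Finite ∧
      ({lam : Λ | c lam = n}).ncard ≤ D := by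
    intro n
    have hset : {lam : Λ | c lam = n} =
        {lam : Λ | ∀ i, (lam : EuclideanSpace ℝ (Fin d)) i ≤ (emb d n) i ∧
          (emb d n) i < (lam : EuclideanSpace ℝ (Fin d)) i + 1} := by
      ext lam
      simp only [Set.mem_setOf_eq, hc_def, funext_iff, emb, WithLp.ofLp_toLp]
      constructor
      · intro h i
        have := h i
        have h1 : ((n i : ℝ)) - 1 < (lam : EuclideanSpace ℝ (Fin d)) i ∧
            (lam : EuclideanSpace ℝ (Fin d)) i ≤ (n i : ℝ) := by
          rw [← this]
          exact ⟨by linarith [Int.ceil_lt_add_one ((lam : EuclideanSpace ℝ (Fin d)) i)],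
            Int.le_ceil _⟩
        exact ⟨h1.2, by linarith [h1.1]⟩
      · intro h i
        rw [Int.ceil_eq_iff]
        constructor
        · push_cast; linarith [(h i).2]
        · exact (h i).1
    rw [hset]
    exact hΛ (emb d n)
  set m : Fin d → ℤ := fun i => ⌈μ i⌉ with hm_def
  -- summability over the lattice
  have hgm : Summable (fun n : Fin d → ℤ => (1 + ‖emb d (n - m)‖) ^ (-β)) :=
    (Equiv.subRight m).summable_iff.mpr hg
  have hgm_sum : (∑' n : Fin d → ℤ, (1 + ‖emb d (n - m)‖) ^ (-β)) = S₀ :=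
    (Equiv.subRight m).tsum_eq (fun k => (1 + ‖emb d k‖) ^ (-β))
  have hle2 : ∀ n : Fin d → ℤ,
      (1 + dist (emb d n) μ) ^ (-β) ≤ K * (1 + ‖emb d (n - m)‖) ^ (-β) := by
    intro n
    have hdist : dist μ (emb d m) ≤ Real.sqrt d := dist_ceil μ
    have h := shift μ (emb d m) (emb d n) hdist
    have hd1 : dist (emb d n) μ = dist μ (emb d n) := dist_comm _ _
    have hd2 : dist (emb d m) (emb d n) = ‖emb d (n - m)‖ := by
      rw [dist_eq_norm]
      have : emb d m - emb d n = -(emb d (n - m)) := by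
        ext i
        show (m i : ℝ) - (n i : ℝ) = -(((n - m) i : ℤ) : ℝ)
        simp only [Pi.sub_apply]
        push_cast
        ring
      rw [this, norm_neg]
    rw [hd1]
    calc (1 + dist μ (emb d n)) ^ (-β) ≤ K * (1 + dist (emb d m) (emb d n)) ^ (-β) := h
      _ = K * (1 + ‖emb d (n - m)‖) ^ (-β) := by rw [hd2]
  have hG : Summable (fun n : Fin d → ℤ => (1 + dist (emb d n) μ) ^ (-β)) :=
    Summable.of_nonneg_of_le (fun n => Real.rpow_nonneg (by positivity) _)
      hle2 (hgm.mul_left K)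
  have hG_sum : (∑' n : Fin d → ℤ, (1 + dist (emb d n) μ) ^ (-β)) ≤ K * S₀ := by
    calc (∑' n : Fin d → ℤ, (1 + dist (emb d n) μ) ^ (-β))
        ≤ ∑' n : Fin d → ℤ, K * (1 + ‖emb d (n - m)‖) ^ (-β) :=
          Summable.tsum_le_tsum hle2 hG (hgm.mul_left K)
      _ = K * S₀ := by rw [tsum_mul_left, hgm_sum]
  -- the function on Λ
  set f : Λ → ℝ := fun lam => (1 + dist (lam : EuclideanSpace ℝ (Fin d)) μ) ^ (-β)
    with hf_def
  have hf0 : ∀ lam, 0 ≤ f lam := fun lam => Real.rpow_nonneg (by positivity) _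
  have hle1 : ∀ lam : Λ, f lam ≤ K * (1 + dist (emb d (c lam)) μ) ^ (-β) := by
    intro lam
    apply shift _ _ _ (dist_ceil (lam : EuclideanSpace ℝ (Fin d)))
  -- fiberwise bound
  have hfib_bound : ∀ n : Fin d → ℤ,
      (∑' y : {lam : Λ // c lam = n}, f y.1) ≤
        (D : ℝ) * K * (1 + dist (emb d n) μ) ^ (-β) := by
    intro n
    haveI : Fintype {lam : Λ // c lam = n} := (hfin n).1.fintype
    rw [tsum_fintype]
    have hcard : (Fintype.card {lam : Λ // c lam = n} : ℝ) ≤ (D : ℝ) := by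
      have h1 : Fintype.card {lam : Λ // c lam = n} =
          Nat.card {lam : Λ // c lam = n} := (Nat.card_eq_fintype_card).symm
      have h2 : Nat.card {lam : Λ // c lam = n} = ({lam : Λ | c lam = n}).ncard :=
        Nat.card_coe_set_eq _
      rw [h1, h2]
      exact_mod_cast (hfin n).2
    have hB : 0 ≤ K * (1 + dist (emb d n) μ) ^ (-β) :=
      mul_nonneg hKpos.le (Real.rpow_nonneg (by positivity) _)
    have hsum := Finset.sum_le_card_nsmul Finset.univ (fun y : {lam : Λ // c lam = n} => f y.1)
      (K * (1 + dist (emb d n) μ) ^ (-β)) (fun y _ => by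
        have h := hle1 y.1
        rw [y.2] at h
        exact h)
    calc (∑ y : {lam : Λ // c lam = n}, f y.1)
        ≤ (Finset.univ.card : ℕ) • (K * (1 + dist (emb d n) μ) ^ (-β)) := hsum
      _ = (Fintype.card {lam : Λ // c lam = n} : ℝ) *
            (K * (1 + dist (emb d n) μ) ^ (-β)) := by
          rw [nsmul_eq_mul, Finset.card_univ]
      _ ≤ (D : ℝ) * (K * (1 + dist (emb d n) μ) ^ (-β)) :=
          mul_le_mul_of_nonneg_right hcard hB
      _ = (D : ℝ) * K * (1 + dist (emb d n) μ) ^ (-β) := by ring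
  haveI hfinsub : ∀ n : Fin d → ℤ, Finite {lam : Λ // c lam = n} :=
    fun n => (hfin n).1.to_subtype
  have hfibsum : ∀ n : Fin d → ℤ, Summable (fun y : {lam : Λ // c lam = n} => f y.1) :=
    fun n => Summable.of_finite
  have hDKsum : Summable (fun n : Fin d → ℤ =>
      (D : ℝ) * K * (1 + dist (emb d n) μ) ^ (-β)) := hG.mul_left _
  have hsig : Summable (fun n : Fin d → ℤ => ∑' y : {lam : Λ // c lam = n}, f y.1) :=
    Summable.of_nonneg_of_le (fun n => tsum_nonneg fun y => hf0 _) hfib_bound hDKsum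
  set e := Equiv.sigmaFiberEquiv c with he_def
  have hfe : Summable (fun p : Σ n : Fin d → ℤ, {lam : Λ // c lam = n} => f (e p)) := by
    rw [summable_sigma_of_nonneg (fun p => hf0 _)]
    exact ⟨hfibsum, hsig⟩
  have hfsummable : Summable f := e.summable_iff.mp hfe
  refine ⟨hfsummable, ?_⟩
  have htsum_eq : (∑' lam : Λ, f lam) =
      ∑' n : Fin d → ℤ, ∑' y : {lam : Λ // c lam = n}, f y.1 := by
    rw [← e.tsum_eq f]
    exact Summable.tsum_sigma' hfibsum hfe
  rw [htsum_eq]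
  have step1 : (∑' n : Fin d → ℤ, ∑' y : {lam : Λ // c lam = n}, f y.1) ≤
      ∑' n : Fin d → ℤ, (D : ℝ) * K * (1 + dist (emb d n) μ) ^ (-β) :=
    Summable.tsum_le_tsum hfib_bound hsig hDKsum
  have step2 : (∑' n : Fin d → ℤ, (D : ℝ) * K * (1 + dist (emb d n) μ) ^ (-β)) =
      (D : ℝ) * K * ∑' n : Fin d → ℤ, (1 + dist (emb d n) μ) ^ (-β) := tsum_mul_left
  have step3 : (D : ℝ) * K * (∑' n : Fin d → ℤ, (1 + dist (emb d n) μ) ^ (-β)) ≤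
      (D : ℝ) * K * (K * S₀) :=
    mul_le_mul_of_nonneg_left hG_sum (mul_nonneg (Nat.cast_nonneg D) hKpos.le)
  linarith [step1, step2 ▸ step1]

end

end Stmt5Aux

/-- For `β > d` and a relatively-separated `Λ ⊆ ℝ^d`, the Jaffard class
`𝒥_β(Λ)` is closed under matrix multiplication, with a submultiplicative norm bound
`‖AB‖_{𝒥_β} ≤ C ‖A‖_{𝒥_β} ‖B‖_{𝒥_β}` for a constant `C` depending only on `β, d`
and the separation constant. -/
theorem stmt_5 {d : ℕ} (β : ℝ) (hβ : (d : ℝ) < β)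
    (Λ : Set (EuclideanSpace ℝ (Fin d))) (D : ℕ) (hΛ : RelSep Λ D) :
    ∃ C > (0 : ℝ), ∀ (a b : Λ → Λ → ℝ) (Na Nb : ℝ),
      (∀ lam lam' : Λ, (1 + dist (lam : EuclideanSpace ℝ (Fin d)) (lam' : EuclideanSpace ℝ (Fin d))) ^ β * |a lam lam'| ≤ Na) →
      (∀ lam lam' : Λ, (1 + dist (lam : EuclideanSpace ℝ (Fin d)) (lam' : EuclideanSpace ℝ (Fin d))) ^ β * |b lam lam'| ≤ Nb) →
      ∀ lam lam'' : Λ,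
        Summable (fun lam' : Λ => a lam lam' * b lam' lam'') ∧
        (1 + dist (lam : EuclideanSpace ℝ (Fin d)) (lam'' : EuclideanSpace ℝ (Fin d))) ^ β *
            |∑' lam' : Λ, a lam lam' * b lam' lam''| ≤ C * Na * Nb := by
  have hβ0 : 0 < β := lt_of_le_of_lt (Nat.cast_nonneg d) hβ
  obtain ⟨S, hS, hkey⟩ := Stmt5Aux.key_lemma β hβ Λ D hΛ
  have h2β : (0 : ℝ) < (2 : ℝ) ^ β := Real.rpow_pos_of_pos (by norm_num) _
  refine ⟨(2 : ℝ) ^ β * (2 * S), by positivity, ?_⟩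
  intro a b Na Nb ha hb lam lam''
  have hNa : 0 ≤ Na := le_trans (by positivity) (ha lam lam)
  have hNb : 0 ≤ Nb := le_trans (by positivity) (hb lam lam)
  set u : Λ → ℝ :=
    fun lam' => (1 + dist (lam' : EuclideanSpace ℝ (Fin d)) (lam : EuclideanSpace ℝ (Fin d))) ^ (-β) with hu_def
  set v : Λ → ℝ :=
    fun lam' => (1 + dist (lam' : EuclideanSpace ℝ (Fin d)) (lam'' : EuclideanSpace ℝ (Fin d))) ^ (-β) with hv_def
  have hu0 : ∀ lam', 0 ≤ u lam' := fun lam' => Real.rpow_nonneg (by positivity) _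
  have hv0 : ∀ lam', 0 ≤ v lam' := fun lam' => Real.rpow_nonneg (by positivity) _
  have hus : Summable u := (hkey (lam : EuclideanSpace ℝ (Fin d))).1
  have hvs : Summable v := (hkey (lam'' : EuclideanSpace ℝ (Fin d))).1
  have husum : (∑' lam', u lam') ≤ S := (hkey (lam : EuclideanSpace ℝ (Fin d))).2
  have hvsum : (∑' lam', v lam') ≤ S := (hkey (lam'' : EuclideanSpace ℝ (Fin d))).2
  set r : ℝ := 1 + dist (lam : EuclideanSpace ℝ (Fin d)) (lam'' : EuclideanSpace ℝ (Fin d)) with hr_def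
  have hrpos : 0 < r := by rw [hr_def]; positivity
  have hrb : 0 < r ^ β := Real.rpow_pos_of_pos hrpos β
  have hrnb : 0 ≤ r ^ (-β) := Real.rpow_nonneg hrpos.le _
  -- pointwise bounds on the entries
  have hua : ∀ lam' : Λ, |a lam lam'| ≤ Na * u lam' := by
    intro lam'
    set X : ℝ := 1 + dist (lam : EuclideanSpace ℝ (Fin d)) (lam' : EuclideanSpace ℝ (Fin d)) with hX_def
    have hXpos : 0 < X := by rw [hX_def]; positivity
    have heq : |a lam lam'| = X ^ (-β) * (X ^ β * |a lam lam'|) := by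
      rw [← mul_assoc, ← Real.rpow_add hXpos]
      simp
    have hXu : X ^ (-β) = u lam' := by
      rw [hu_def, hX_def, dist_comm]
    calc |a lam lam'| = X ^ (-β) * (X ^ β * |a lam lam'|) := heq
      _ ≤ X ^ (-β) * Na :=
          mul_le_mul_of_nonneg_left (ha lam lam') (Real.rpow_nonneg hXpos.le _)
      _ = Na * u lam' := by rw [hXu, mul_comm]
  have hvb : ∀ lam' : Λ, |b lam' lam''| ≤ Nb * v lam' := by
    intro lam'
    set X : ℝ := 1 + dist (lam' : EuclideanSpace ℝ (Fin d)) (lam'' : EuclideanSpace ℝ (Fin d)) with hX_def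
    have hXpos : 0 < X := by rw [hX_def]; positivity
    have heq : |b lam' lam''| = X ^ (-β) * (X ^ β * |b lam' lam''|) := by
      rw [← mul_assoc, ← Real.rpow_add hXpos]
      simp
    calc |b lam' lam''| = X ^ (-β) * (X ^ β * |b lam' lam''|) := heq
      _ ≤ X ^ (-β) * Nb :=
          mul_le_mul_of_nonneg_left (hb lam' lam'') (Real.rpow_nonneg hXpos.le _)
      _ = Nb * v lam' := by rw [mul_comm]
  -- the key convolution-type pointwise estimate
  have pair : ∀ lam' : Λ, u lam' * v lam' ≤ 2 ^ β * r ^ (-β) * (u lam' + v lam') := by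
    intro lam'
    set s : ℝ := 1 + dist (lam' : EuclideanSpace ℝ (Fin d)) (lam : EuclideanSpace ℝ (Fin d)) with hs_def
    set t : ℝ := 1 + dist (lam' : EuclideanSpace ℝ (Fin d)) (lam'' : EuclideanSpace ℝ (Fin d)) with ht_def
    have hs1 : 0 < s := by rw [hs_def]; positivity
    have ht1 : 0 < t := by rw [ht_def]; positivity
    have htri : r ≤ s + t := by
      rw [hr_def, hs_def, ht_def]
      have := dist_triangle (lam : EuclideanSpace ℝ (Fin d))
        (lam' : EuclideanSpace ℝ (Fin d)) (lam'' : EuclideanSpace ℝ (Fin d))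
      rw [dist_comm (lam : EuclideanSpace ℝ (Fin d)) (lam' : EuclideanSpace ℝ (Fin d))] at this
      linarith [dist_nonneg (x := (lam' : EuclideanSpace ℝ (Fin d))) (y := (lam : EuclideanSpace ℝ (Fin d))),
        dist_nonneg (x := (lam' : EuclideanSpace ℝ (Fin d))) (y := (lam'' : EuclideanSpace ℝ (Fin d)))]
    have huls : u lam' = s ^ (-β) := rfl
    have hvlt : v lam' = t ^ (-β) := rfl
    have hXnn : 0 ≤ 2 ^ β * r ^ (-β) := mul_nonneg h2β.le hrnb
    rcases le_total s t with hst | hst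
    · -- s ≤ t, so r ≤ 2 t
      have h2t : r ≤ 2 * t := by linarith
      have hrt : r ^ β ≤ 2 ^ β * t ^ β := by
        calc r ^ β ≤ (2 * t) ^ β := Real.rpow_le_rpow hrpos.le h2t hβ0.le
          _ = 2 ^ β * t ^ β := Real.mul_rpow (by norm_num) ht1.le
      have htv : t ^ (-β) ≤ 2 ^ β * r ^ (-β) :=
        Stmt5Aux.rpow_neg_le_of_le ht1 hrpos hrt
      rw [huls, hvlt]
      nlinarith [mul_le_mul_of_nonneg_left htv (Real.rpow_nonneg hs1.le (-β)),
        mul_nonneg hXnn (Real.rpow_nonneg ht1.le (-β))]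
    · -- t ≤ s, so r ≤ 2 s
      have h2s : r ≤ 2 * s := by linarith
      have hrs : r ^ β ≤ 2 ^ β * s ^ β := by
        calc r ^ β ≤ (2 * s) ^ β := Real.rpow_le_rpow hrpos.le h2s hβ0.le
          _ = 2 ^ β * s ^ β := Real.mul_rpow (by norm_num) hs1.le
      have hsv : s ^ (-β) ≤ 2 ^ β * r ^ (-β) :=
        Stmt5Aux.rpow_neg_le_of_le hs1 hrpos hrs
      rw [huls, hvlt]
      nlinarith [mul_le_mul_of_nonneg_left hsv (Real.rpow_nonneg ht1.le (-β)),
        mul_nonneg hXnn (Real.rpow_nonneg hs1.le (-β))]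
  -- summability
  have habs : ∀ lam' : Λ, |a lam lam' * b lam' lam''| ≤
      Na * Nb * (2 ^ β * r ^ (-β) * (u lam' + v lam')) := by
    intro lam'
    rw [abs_mul]
    calc |a lam lam'| * |b lam' lam''| ≤ (Na * u lam') * (Nb * v lam') :=
          mul_le_mul (hua lam') (hvb lam') (abs_nonneg _)
            (mul_nonneg hNa (hu0 lam'))
      _ = Na * Nb * (u lam' * v lam') := by ring
      _ ≤ Na * Nb * (2 ^ β * r ^ (-β) * (u lam' + v lam')) :=
          mul_le_mul_of_nonneg_left (pair lam') (mul_nonneg hNa hNb)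
  have hbig : Summable (fun lam' : Λ =>
      Na * Nb * (2 ^ β * r ^ (-β) * (u lam' + v lam'))) :=
    (((hus.add hvs).mul_left _).mul_left _)
  have habs_sum : Summable (fun lam' : Λ => |a lam lam' * b lam' lam''|) :=
    Summable.of_nonneg_of_le (fun _ => abs_nonneg _) habs hbig
  have hsum : Summable (fun lam' : Λ => a lam lam' * b lam' lam'') :=
    summable_abs_iff.mp habs_sum
  refine ⟨hsum, ?_⟩
  have h1 : |∑' lam' : Λ, a lam lam' * b lam' lam''| ≤
      ∑' lam' : Λ, |a lam lam' * b lam' lam''| := by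
    have h := norm_tsum_le_tsum_norm (f := fun lam' : Λ => a lam lam' * b lam' lam'')
      (by simpa only [Real.norm_eq_abs] using habs_sum)
    simpa only [Real.norm_eq_abs] using h
  have h2 : (∑' lam' : Λ, |a lam lam' * b lam' lam''|) ≤
      Na * Nb * (2 ^ β * r ^ (-β) * ((∑' lam', u lam') + ∑' lam', v lam')) := by
    calc (∑' lam' : Λ, |a lam lam' * b lam' lam''|)
        ≤ ∑' lam' : Λ, Na * Nb * (2 ^ β * r ^ (-β) * (u lam' + v lam')) :=
          Summable.tsum_le_tsum habs habs_sum hbig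
      _ = Na * Nb * (2 ^ β * r ^ (-β) * ((∑' lam', u lam') + ∑' lam', v lam')) := by
          rw [tsum_mul_left, tsum_mul_left, Summable.tsum_add hus hvs]
  have hcancel : r ^ β * r ^ (-β) = 1 := by
    rw [← Real.rpow_add hrpos]
    simp
  have hUV : (∑' lam', u lam') + (∑' lam', v lam') ≤ 2 * S := by linarith
  have hUVnn : 0 ≤ (∑' lam', u lam') + (∑' lam', v lam') := by
    have h1' : 0 ≤ ∑' lam', u lam' := tsum_nonneg hu0
    have h2' : 0 ≤ ∑' lam', v lam' := tsum_nonneg hv0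
    linarith
  calc r ^ β * |∑' lam' : Λ, a lam lam' * b lam' lam''|
      ≤ r ^ β * (Na * Nb * (2 ^ β * r ^ (-β) *
          ((∑' lam', u lam') + ∑' lam', v lam'))) :=
        mul_le_mul_of_nonneg_left (h1.trans h2) hrb.le
    _ = 2 ^ β * ((∑' lam', u lam') + ∑' lam', v lam') * Na * Nb *
          (r ^ β * r ^ (-β)) := by ring
    _ = 2 ^ β * ((∑' lam', u lam') + ∑' lam', v lam') * Na * Nb := by
        rw [hcancel, mul_one]
    _ ≤ 2 ^ β * (2 * S) * Na * Nb := by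
        have hstep : 2 ^ β * ((∑' lam', u lam') + ∑' lam', v lam') ≤ 2 ^ β * (2 * S) :=
          mul_le_mul_of_nonneg_left hUV h2β.le
        exact mul_le_mul_of_nonneg_right
          (mul_le_mul_of_nonneg_right hstep hNa) hNb
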